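/- arXiv:1310.7843 — 8 statements merged into one kernel-verified Lean document; each statement's English description precedes it below -/
import Mathlib

section
/- Let K be a field with char K = 0 or char K > n. Let M be a K-subspace of Mat_n(K) with tr(A) = 0 for all A ∈ M. If A ∈ Mat_n(K) satisfies A^m ∈ M for all sufficiently large m, then A is nilpotent. -/
open Polynomial Module

/-- If `g - μ•1` is nilpotent, then `trace (g ^ m) = μ ^ m * finrank`. -/
lemma trace_pow_of_isNilpotent_sub {L V : Type*} [Field L] [AddCommGroup V] [Module L V]
    [FiniteDimensional L V] (g : Module.End L V) (μ : L)
    (hng : IsNilpotent (g - algebraMap L (Module.End L V) μ)) (m : ℕ) :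
    LinearMap.trace L V (g ^ m) = μ ^ m * (Module.finrank L V : L) := by
  set c : Module.End L V := algebraMap L (Module.End L V) μ with hc
  have h1 : (aeval g) (X ^ m - C (μ ^ m) : L[X]) = g ^ m - c ^ m := by
    rw [map_sub, map_pow, aeval_X, aeval_C, hc, map_pow]
  have h2 : (aeval g) (X - C μ : L[X]) = g - c := by simp [hc]
  have hnil : IsNilpotent (g ^ m - c ^ m) := by
    have hroot : (X ^ m - C (μ ^ m) : L[X]).IsRoot μ := by simp
    obtain ⟨r, hr⟩ := (dvd_iff_isRoot).mpr hroot
    have heq : g ^ m - c ^ m = (g - c) * (aeval g) r := by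
      rw [← h1, hr, map_mul, h2]
    rw [heq]
    have hcomm : Commute (g - c) ((aeval g) r) := h2 ▸ ((Commute.all (X - C μ) r).map (aeval g))
    exact hcomm.isNilpotent_mul_right hng
  have h0 : LinearMap.trace L V (g ^ m - c ^ m) = 0 :=
    (LinearMap.isNilpotent_trace_of_isNilpotent hnil).eq_zero
  have hsplit : g ^ m = c ^ m + (g ^ m - c ^ m) := by abel
  have hcm : LinearMap.trace L V (c ^ m) = μ ^ m * (Module.finrank L V : L) := by
    rw [hc, ← map_pow, Algebra.algebraMap_eq_smul_one, map_smul, LinearMap.trace_one,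
      smul_eq_mul]
  rw [hsplit, map_add, h0, add_zero, hcm]

/-- Over an algebraically closed field, an endomorphism whose large power traces all vanish
is nilpotent (under suitable characteristic hypotheses). -/
lemma end_nilpotent_of_trace_pow {L V : Type*} [Field L] [IsAlgClosed L] [AddCommGroup V]
    [Module L V] [FiniteDimensional L V]
    (hchar : ∀ i : ℕ, 1 ≤ i → i ≤ Module.finrank L V → (i : L) ≠ 0)
    (f : Module.End L V) (N : ℕ) (hf : ∀ m ≥ N, LinearMap.trace L V (f ^ m) = 0) :
    IsNilpotent f := by
  classical
  have hfin : {μ : L | f.maxGenEigenspace μ ≠ ⊥}.Finite :=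
    WellFoundedGT.finite_ne_bot_of_iSupIndep f.independent_maxGenEigenspace
  have hds := DirectSum.isInternal_submodule_of_iSupIndep_of_iSup_eq_top
    f.independent_maxGenEigenspace (Module.End.iSup_maxGenEigenspace_eq_top f)
  have hmapsTo : ∀ μ : L, Set.MapsTo f (f.maxGenEigenspace μ) (f.maxGenEigenspace μ) :=
    fun μ ↦ f.mapsTo_maxGenEigenspace_of_comm rfl μ
  have hmapsTo' : ∀ (m : ℕ) (μ : L),
      Set.MapsTo (f ^ m) (f.maxGenEigenspace μ) (f.maxGenEigenspace μ) :=
    fun m μ ↦ f.mapsTo_maxGenEigenspace_of_comm ((Commute.refl f).pow_right m) μ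
  set s : Finset L := hfin.toFinset with hs
  set d : L → L := fun μ ↦ (Module.finrank L (f.maxGenEigenspace μ) : L) with hd
  -- trace of restricted powers
  have hrestr : ∀ (m : ℕ) (μ : L),
      LinearMap.trace L (f.maxGenEigenspace μ) ((f ^ m).restrict (hmapsTo' m μ))
        = μ ^ m * d μ := by
    intro m μ
    have hpow : (f.restrict (hmapsTo μ)) ^ m = (f ^ m).restrict (hmapsTo' m μ) := by
      rw [Module.End.pow_restrict m (hmapsTo μ)]
    rw [← hpow]
    apply trace_pow_of_isNilpotent_sub
    have hres : f.restrict (hmapsTo μ) - algebraMap L (Module.End L (f.maxGenEigenspace μ)) μ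
        = (f - algebraMap L (Module.End L V) μ).restrict
          (Module.End.mapsTo_maxGenEigenspace_of_comm
            (Algebra.mul_sub_algebraMap_commutes f μ) μ) := by
      ext x
      simp [LinearMap.restrict_apply, Module.algebraMap_end_apply]
      rfl
    rw [hres]
    exact f.isNilpotent_restrict_maxGenEigenspace_sub_algebraMap μ
  have key : ∀ m, N ≤ m → ∑ μ ∈ s, μ ^ m * d μ = 0 := by
    intro m hm
    rw [← hf m hm, LinearMap.trace_eq_sum_trace_restrict' hds hfin (hmapsTo' m)]
    exact Finset.sum_congr rfl fun μ _ ↦ (hrestr m μ).symm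
  -- all eigenvalues are zero
  have hzero : ∀ μ ∈ s, μ = 0 := by
    intro μ0 hμ0
    by_contra hne
    set q : L[X] := Lagrange.basis s id μ0 with hq
    have hinj : Set.InjOn (id : L → L) s := fun a _ b _ h ↦ h
    have hq0 : q.eval μ0 = 1 := Lagrange.eval_basis_self hinj hμ0
    have hqν : ∀ ν ∈ s, ν ≠ μ0 → q.eval ν = 0 := fun ν hν hνne ↦ by
      simpa using Lagrange.eval_basis_of_ne (v := (id : L → L)) (i := μ0) (j := ν)
        (fun h ↦ hνne h.symm) hν
    have hSa : ∑ μ ∈ s, d μ * μ ^ N * q.eval μ = d μ0 * μ0 ^ N := by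
      rw [Finset.sum_eq_single μ0]
      · rw [hq0, mul_one]
      · intro ν hν hνne
        rw [hqν ν hν hνne, mul_zero]
      · intro h; exact absurd hμ0 h
    have hSb : ∑ μ ∈ s, d μ * μ ^ N * q.eval μ = 0 := by
      have heval : ∀ μ : L, q.eval μ
          = ∑ j ∈ Finset.range (q.natDegree + 1), q.coeff j * μ ^ j := by
        intro μ; rw [Polynomial.eval_eq_sum_range]
      calc ∑ μ ∈ s, d μ * μ ^ N * q.eval μ
          = ∑ μ ∈ s, ∑ j ∈ Finset.range (q.natDegree + 1),
              q.coeff j * (μ ^ (N + j) * d μ) := by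
            refine Finset.sum_congr rfl fun μ _ ↦ ?_
            rw [heval μ, Finset.mul_sum]
            refine Finset.sum_congr rfl fun j _ ↦ ?_
            rw [pow_add]; ring
        _ = ∑ j ∈ Finset.range (q.natDegree + 1),
              q.coeff j * ∑ μ ∈ s, μ ^ (N + j) * d μ := by
            rw [Finset.sum_comm]
            exact Finset.sum_congr rfl fun j _ ↦ (Finset.mul_sum _ _ _).symm
        _ = 0 := by
            refine Finset.sum_eq_zero fun j _ ↦ ?_
            rw [key (N + j) (Nat.le_add_right N j), mul_zero]
    have hd0 : d μ0 = 0 := by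
      have := hSa.symm.trans hSb
      rcases mul_eq_zero.mp this with h | h
      · exact h
      · exact absurd ((pow_eq_zero_iff').mp h).1 hne
    have hbot : f.maxGenEigenspace μ0 ≠ ⊥ := by
      simpa [hs] using hμ0
    have hpos : 1 ≤ Module.finrank L (f.maxGenEigenspace μ0) := by
      rw [Nat.one_le_iff_ne_zero]
      intro h
      exact hbot (Submodule.finrank_eq_zero.mp h)
    have hle : Module.finrank L (f.maxGenEigenspace μ0) ≤ Module.finrank L V :=
      Submodule.finrank_le _
    exact hchar _ hpos hle hd0
  -- hence the generalized 0-eigenspace is everything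
  have htop : f.maxGenEigenspace 0 = ⊤ := by
    apply top_unique
    rw [← Module.End.iSup_maxGenEigenspace_eq_top f]
    refine iSup_le fun μ ↦ ?_
    rcases eq_or_ne μ 0 with h | h
    · rw [h]
    · have : f.maxGenEigenspace μ = ⊥ := by
        by_contra hb
        exact h (hzero μ (hfin.mem_toFinset.mpr hb))
      rw [this]; exact bot_le
  -- conclude nilpotency
  have hker : ∀ x : V, ∃ k : ℕ, (f ^ k) x = 0 := by
    intro x
    have hx : x ∈ f.maxGenEigenspace 0 := htop ▸ Submodule.mem_top
    obtain ⟨k, hk⟩ := (Module.End.mem_maxGenEigenspace f 0 x).mp hx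
    refine ⟨k, ?_⟩
    simpa using hk
  exact (LinearMap.charpoly_nilpotent_tfae f).out 2 0 |>.mp hker

theorem nilpotent_of_eventual_powers_mem {n : ℕ} (hn : 1 ≤ n) {K : Type*} [Field K]
    (hchar : ∀ i ∈ Finset.Icc 1 n, (i : K) ≠ 0)
    (M : Submodule K (Matrix (Fin n) (Fin n) K))
    (htr : ∀ A ∈ M, Matrix.trace A = 0)
    (A : Matrix (Fin n) (Fin n) K)
    (hA : ∃ N : ℕ, ∀ m ≥ N, A ^ m ∈ M) :
    IsNilpotent A := by
  obtain ⟨N, hN⟩ := hA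
  set L := AlgebraicClosure K
  set φ : K →+* L := algebraMap K L with hφ
  have hφinj : Function.Injective φ := φ.injective
  set B : Matrix (Fin n) (Fin n) L := φ.mapMatrix A with hB
  -- reduce to B
  suffices hBnil : IsNilpotent B by
    obtain ⟨k, hk⟩ := hBnil
    refine ⟨k, ?_⟩
    have : φ.mapMatrix (A ^ k) = φ.mapMatrix 0 := by
      rw [map_pow, ← hB, hk, map_zero]
    exact (Matrix.map_injective hφinj) (by simpa [RingHom.mapMatrix_apply] using this)
  -- traces of powers of B vanish
  have htrB : ∀ m ≥ N, Matrix.trace (B ^ m) = 0 := by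
    intro m hm
    have h1 : B ^ m = φ.mapMatrix (A ^ m) := by rw [hB, map_pow]
    have h2 : Matrix.trace (A ^ m) = 0 := htr _ (hN m hm)
    rw [h1, RingHom.mapMatrix_apply]
    simp only [Matrix.trace, Matrix.diag_apply, Matrix.map_apply, ← map_sum]
    rw [show ∑ i, (A ^ m) i i = Matrix.trace (A ^ m) from rfl, h2, map_zero]
  -- pass to the endomorphism
  set f : Module.End L (Fin n → L) := Matrix.toLinAlgEquiv' B with hf
  have htrf : ∀ m ≥ N, LinearMap.trace L (Fin n → L) (f ^ m) = 0 := by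
    intro m hm
    have h1 : f ^ m = Matrix.toLinAlgEquiv' (B ^ m) := by rw [hf, map_pow]
    rw [h1, LinearMap.trace_eq_matrix_trace L (Pi.basisFun L (Fin n)),
      LinearMap.toMatrix_eq_toMatrix']
    have : LinearMap.toMatrix' (Matrix.toLinAlgEquiv' (B ^ m) : (Fin n → L) →ₗ[L] Fin n → L)
        = B ^ m := LinearMap.toMatrix'_toLin' (B ^ m)
    rw [this, htrB m hm]
  have hcharL : ∀ i : ℕ, 1 ≤ i → i ≤ Module.finrank L (Fin n → L) → (i : L) ≠ 0 := by
    intro i h1 h2 hzero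
    have hfr : Module.finrank L (Fin n → L) = n := by
      simp [Module.finrank_pi]
    have hi : i ∈ Finset.Icc 1 n := Finset.mem_Icc.mpr ⟨h1, hfr ▸ h2⟩
    apply hchar i hi
    have : φ ((i : K)) = (i : L) := map_natCast φ i
    apply hφinj
    rw [this, hzero, map_zero]
  have hfnil : IsNilpotent f := end_nilpotent_of_trace_pow hcharL f N htrf
  obtain ⟨k, hk⟩ := hfnil
  refine ⟨k, ?_⟩
  have : Matrix.toLinAlgEquiv' (B ^ k) = (0 : Module.End L (Fin n → L)) := by
    rw [map_pow, ← hf, hk]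
  have h0 := Matrix.toLinAlgEquiv'.injective (this.trans (map_zero _).symm)
  simpa using h0
end

section
/- Let K be a field and M a left Mathieu subspace of Mat_n(K). Suppose M contains two idempotents E and E' such that E + E' is invertible (e.g., unipotent). Then M = Mat_n(K). -/
lemma idem_pow {K : Type*} [Field K] {n : ℕ} {E : Matrix (Fin n) (Fin n) K}
    (hE : E * E = E) : ∀ m : ℕ, 1 ≤ m → E ^ m = E := by
  intro m hm
  induction m with
  | zero => omega
  | succ k ih =>
    rcases Nat.eq_or_lt_of_le hm with h | h
    · simp [← h]
    · rw [pow_succ, ih (by omega), hE]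

theorem eq_top_of_idempotents_sum_unit {n : ℕ} {K : Type*} [Field K]
    (M : Submodule K (Matrix (Fin n) (Fin n) K))
    (hM : ∀ a b : Matrix (Fin n) (Fin n) K,
      (∀ m : ℕ, 1 ≤ m → a ^ m ∈ M) → ∃ N : ℕ, ∀ m ≥ N, b * a ^ m ∈ M)
    (E E' : Matrix (Fin n) (Fin n) K)
    (hE : E * E = E) (hE' : E' * E' = E')
    (hEM : E ∈ M) (hE'M : E' ∈ M)
    (hunit : IsUnit (E + E')) :
    M = ⊤ := by
  have key : ∀ (F : Matrix (Fin n) (Fin n) K), F * F = F → F ∈ M →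
      ∀ b, b * F ∈ M := by
    intro F hF hFM b
    obtain ⟨N, hN⟩ := hM F b (fun m hm => by rw [idem_pow hF m hm]; exact hFM)
    have := hN (max N 1) (le_max_left _ _)
    rwa [idem_pow hF _ (le_max_right _ _)] at this
  rw [eq_top_iff]
  intro A _
  obtain ⟨u, hu⟩ := hunit
  set b := A * (↑u⁻¹ : Matrix (Fin n) (Fin n) K) with hb
  have hA : A = b * E + b * E' := by
    rw [← Matrix.mul_add, hb, Matrix.mul_assoc, ← hu, Units.inv_mul, Matrix.mul_one]
  rw [hA]
  exact M.add_mem (key E hE hEM b) (key E' hE' hE'M b)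
end

section
/- Let K be a field, f ∈ K[x₁,...,xₙ] a homogeneous polynomial of degree d, and S ⊆ K a subset with 0 ∈ S and #S ≥ max{d, 2}. If f vanishes at every point of S^n, then f = 0. -/
open MvPolynomial Polynomial

private lemma homog_zero_of_constantCoeff_zero {K : Type*} [CommRing K] {σ : Type*} {d : ℕ}
    {f : MvPolynomial σ K} (hf : f.IsHomogeneous d) (h : MvPolynomial.constantCoeff f = 0)
    (hd : d = 0) : f = 0 := by
  ext m
  rcases eq_or_ne m 0 with rfl | hm
  · simpa [MvPolynomial.constantCoeff] using h
  · exact hf.coeff_eq_zero (by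
      rw [hd]
      simpa [Finsupp.degree_eq_zero_iff] using hm)

theorem vanish_lemma_homogeneous {n : ℕ} {K : Type*} [Field K] (d : ℕ)
    (f : MvPolynomial (Fin n) K) (hf : f.IsHomogeneous d)
    (S : Finset K) (h0 : (0 : K) ∈ S) (hS : max d 2 ≤ S.card)
    (hvan : ∀ v : Fin n → K, (∀ i, v i ∈ S) → MvPolynomial.eval v f = 0) :
    f = 0 := by
  induction n generalizing d with
  | zero =>
    have hc : MvPolynomial.constantCoeff f = 0 := by
      rw [← MvPolynomial.eval_zero]
      exact hvan 0 (fun i => i.elim0)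
    ext m
    rcases eq_or_ne m 0 with rfl | hm
    · simpa [MvPolynomial.constantCoeff] using hc
    · exact absurd (Subsingleton.elim m 0) hm
  | succ n IH =>
    rcases Nat.eq_zero_or_pos d with rfl | hd1
    · refine homog_zero_of_constantCoeff_zero hf ?_ rfl
      rw [← MvPolynomial.eval_zero]
      exact hvan 0 (fun _ => h0)
    set q := MvPolynomial.finSuccEquiv K n f with hq
    rcases eq_or_ne f 0 with rfl | hf0
    · rfl
    have hq0 : q ≠ 0 := fun h => hf0 ((MvPolynomial.finSuccEquiv K n).injective (by simp [← hq, h]))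
    have hdeg0 : q.natDegree ≤ d := by
      rw [hq, MvPolynomial.natDegree_finSuccEquiv]
      exact (MvPolynomial.degreeOf_le_totalDegree f 0).trans (hf.totalDegree hf0).le
    have hcoeff : ∀ k, k ≤ d → (q.coeff k).IsHomogeneous (d - k) := fun k hk =>
      hf.finSuccEquiv_coeff_isHomogeneous k (d - k) (by omega)
    -- get a nonzero element of S
    obtain ⟨s, hsS, hs0⟩ : ∃ s ∈ S, s ≠ 0 := by
      by_contra h
      push_neg at h
      have : S ⊆ {0} := fun x hx => Finset.mem_singleton.mpr (h x hx)
      have := Finset.card_le_card this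
      simp only [Finset.card_singleton] at this
      omega
    -- the top coefficient is zero
    have hklt : ∀ k < d, MvPolynomial.eval (0 : Fin n → K) (q.coeff k) = 0 := by
      intro k hk
      rw [MvPolynomial.eval_zero]
      exact (hcoeff k hk.le).coeff_eq_zero (by simp [map_zero]; omega)
    have hkgt : ∀ k > d, q.coeff k = 0 := fun k hk =>
      Polynomial.coeff_eq_zero_of_natDegree_lt (lt_of_le_of_lt hdeg0 hk)
    have htopc : MvPolynomial.eval (0 : Fin n → K) (q.coeff d) = 0 := by
      have hev : Polynomial.eval s (q.map (MvPolynomial.eval (0 : Fin n → K))) = 0 := by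
        rw [← MvPolynomial.eval_eq_eval_mv_eval']
        refine hvan _ fun i => ?_
        refine Fin.cases ?_ ?_ i
        · simpa using hsS
        · intro j; simpa using h0
      have hmapdeg : (q.map (MvPolynomial.eval (0 : Fin n → K))).natDegree < d + 1 :=
        lt_of_le_of_lt (Polynomial.natDegree_map_le) (by omega)
      rw [Polynomial.eval_eq_sum_range' hmapdeg] at hev
      rw [Finset.sum_eq_single d] at hev
      · rw [Polynomial.coeff_map] at hev
        have : s ^ d ≠ 0 := pow_ne_zero _ hs0
        exact (mul_eq_zero.mp hev).resolve_right this
      · intro k hk hkd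
        rw [Polynomial.coeff_map]
        rcases lt_or_gt_of_ne hkd with h | h
        · rw [hklt k h, zero_mul]
        · rw [hkgt k h, map_zero, zero_mul]
      · intro h; exact absurd (Finset.mem_range.mpr (by omega)) h
    have htop : q.coeff d = 0 :=
      homog_zero_of_constantCoeff_zero (hcoeff d le_rfl) (by
        rw [← MvPolynomial.eval_zero]; exact htopc) (by omega)
    -- natDegree q < d
    have hdeg : q.natDegree < d := by
      rcases lt_or_eq_of_le hdeg0 with h | h
      · exact h
      · exact absurd (by rw [Polynomial.leadingCoeff, h]; exact htop)
          (Polynomial.leadingCoeff_ne_zero.mpr hq0)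
    -- all coefficients vanish on S^n
    have hcoeffvan : ∀ k, ∀ a : Fin n → K, (∀ i, a i ∈ S) → MvPolynomial.eval a (q.coeff k) = 0 := by
      intro k a ha
      have hpz : q.map (MvPolynomial.eval a) = 0 := by
        apply Polynomial.eq_zero_of_natDegree_lt_card_of_eval_eq_zero' _ S
        · intro t ht
          rw [← MvPolynomial.eval_eq_eval_mv_eval']
          refine hvan _ fun i => ?_
          refine Fin.cases ?_ ?_ i
          · simpa using ht
          · intro j; simpa using ha j
        · exact lt_of_le_of_lt Polynomial.natDegree_map_le
            (lt_of_lt_of_le hdeg (le_trans (le_max_left d 2) hS))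
      have := congrArg (fun p => Polynomial.coeff p k) hpz
      simpa [Polynomial.coeff_map] using this
    -- apply induction hypothesis to each coefficient
    have hqz : q = 0 := Polynomial.ext fun k => by
      rw [Polynomial.coeff_zero]
      rcases le_or_gt k d with hk | hk
      · exact IH (d - k) (q.coeff k) (hcoeff k hk) (le_trans (by simp; omega) hS)
          (hcoeffvan k)
      · exact hkgt k hk
    exact (MvPolynomial.finSuccEquiv K n).injective (by simp [← hq, hqz])
end

section
/- Let K be a field, L/K a field extension, and V a K-subspace of m×n matrices over K. Define d = dim over K(x₁,...,xₙ) of the span of {C·x : C ∈ V}, where x = (x₁,...,xₙ) is a vector of indeterminates. Then for every v ∈ L^n, the L-dimension of the span of {C·v : C ∈ V} (with C viewed in Mat_{m,n}(L)) is at most d. -/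
open Matrix Module MvPolynomial

private lemma exists_rows_select {L : Type*} [Field L] {r m : ℕ}
    (u : Fin r → (Fin m → L)) (h : LinearIndependent L u) :
    ∃ ρ : Fin r → Fin m, LinearIndependent L (fun i => u i ∘ ρ) := by
  classical
  set W : Matrix (Fin r) (Fin m) L := Matrix.of u with hW
  have hrank : W.rank = r := by have := h.rank_matrix; rw [Fintype.card_fin] at this; exact this
  have hspan : Submodule.span L (Set.range Wᵀ) = ⊤ := by
    apply Submodule.eq_top_of_finrank_eq
    rw [show Set.range Wᵀ = Set.range W.col from rfl, ← Matrix.rank_eq_finrank_span_cols, hrank, Module.finrank_fin_fun]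
  obtain ⟨b, hbsub, hbspan, hbind⟩ := exists_linearIndependent L (Set.range Wᵀ)
  rw [hspan] at hbspan
  have hbfin : b.Finite := hbind.setFinite
  haveI := hbfin.fintype
  have hcard : Fintype.card b = r := by
    have h1 := finrank_span_set_eq_card hbind
    rw [hbspan, finrank_top, Module.finrank_fin_fun, Set.toFinset_card] at h1
    omega
  let e : Fin r ≃ b := (Fintype.equivFinOfCardEq hcard).symm
  have hc : ∀ x : b, ∃ j, Wᵀ j = ↑x := fun x => hbsub x.2
  choose jf hjf using hc
  refine ⟨fun i => jf (e i), ?_⟩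
  have hcols : LinearIndependent L (fun k : Fin r => (↑(e k) : Fin r → L)) :=
    hbind.comp e e.injective
  set A : Matrix (Fin r) (Fin r) L := Matrix.of (fun i k => u i (jf (e k))) with hA
  have hAt : (fun k => Aᵀ k) = fun k : Fin r => (↑(e k) : Fin r → L) := by
    funext k
    have := hjf (e k)
    ext i
    exact congrFun this i ▸ rfl
  have hunit : IsUnit A := by
    rw [← Matrix.linearIndependent_cols_iff_isUnit, show A.col = fun k => Aᵀ k from rfl, hAt]
    exact hcols
  have := Matrix.linearIndependent_rows_iff_isUnit.mpr hunit
  convert this using 1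
  rfl

private lemma indep_generic {m n : ℕ} {K L : Type*} [Field K] [Field L] [Algebra K L]
    {r : ℕ} (C : Fin r → Matrix (Fin m) (Fin n) K) (v : Fin n → L)
    (h : LinearIndependent L (fun i => ((C i).map (algebraMap K L)).mulVec v)) :
    LinearIndependent (FractionRing (MvPolynomial (Fin n) K))
      (fun i => ((C i).map (algebraMap K (FractionRing (MvPolynomial (Fin n) K)))).mulVec
        (fun j => algebraMap (MvPolynomial (Fin n) K)
          (FractionRing (MvPolynomial (Fin n) K)) (MvPolynomial.X j))) := by
  classical
  set R := MvPolynomial (Fin n) K with hR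
  set F := FractionRing R with hF
  obtain ⟨ρ, hρ⟩ := exists_rows_select _ h
  set Q : Matrix (Fin r) (Fin r) R :=
    Matrix.of (fun i k => (((C k).map (algebraMap K R)).mulVec (fun j => MvPolynomial.X j)) (ρ i))
    with hQ
  have hφQ : Q.map (MvPolynomial.aeval v) =
      Matrix.of (fun i k => (((C k).map (algebraMap K L)).mulVec v) (ρ i)) := by
    ext i k
    simp [hQ, Matrix.mulVec, dotProduct, Matrix.map_apply, MvPolynomial.algebraMap_eq, AlgHom.commutes]
    exact Finset.sum_congr rfl fun j _ => congrArg (· * v j) ((MvPolynomial.aeval v).commutes _)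
  have hALunit : IsUnit (Matrix.of (fun i k => (((C k).map (algebraMap K L)).mulVec v) (ρ i))) := by
    rw [← Matrix.linearIndependent_cols_iff_isUnit]
    convert hρ using 1
    rfl
  have hdetQ : Q.det ≠ 0 := by
    intro h0
    have hd : (Q.map (MvPolynomial.aeval v)).det = 0 := by
      have := ((MvPolynomial.aeval v : R →ₐ[K] L) : R →+* L).map_det Q
      rw [RingHom.mapMatrix_apply] at this
      simp only [AlgHom.coe_toRingHom] at this
      rw [← this, h0, map_zero]
    rw [hφQ] at hd
    exact (Matrix.isUnit_iff_isUnit_det _ |>.mp hALunit).ne_zero hd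
  have hinj : Function.Injective (algebraMap R F) := IsFractionRing.injective R F
  have hdetF : (Q.map (algebraMap R F)).det ≠ 0 := by
    have := (algebraMap R F).map_det Q
    rw [RingHom.mapMatrix_apply] at this
    rw [← this]
    exact fun h0 => hdetQ (hinj (by simpa using h0))
  have hunitF : IsUnit (Q.map (algebraMap R F)) :=
    (Matrix.isUnit_iff_isUnit_det _).mpr (isUnit_iff_ne_zero.mpr hdetF)
  have hcolsF := Matrix.linearIndependent_cols_iff_isUnit.mpr hunitF
  refine LinearIndependent.of_comp (LinearMap.funLeft F F ρ) ?_
  convert hcolsF using 1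
  funext k
  ext i
  simp only [Function.comp_apply, LinearMap.funLeft_apply, Matrix.transpose_apply,
    Matrix.map_apply, hQ, Matrix.of_apply, Matrix.mulVec, dotProduct, map_sum, Matrix.col_apply]
  refine Finset.sum_congr rfl fun j _ => ?_
  rw [_root_.map_mul, ← IsScalarTower.algebraMap_apply K R F]
  rfl

theorem dim_specialization_le {m n : ℕ} {K L : Type*} [Field K] [Field L] [Algebra K L]
    (V : Submodule K (Matrix (Fin m) (Fin n) K)) (d : ℕ)
    (hd : d = Module.finrank (FractionRing (MvPolynomial (Fin n) K))
      (Submodule.span (FractionRing (MvPolynomial (Fin n) K))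
        {w : Fin m → FractionRing (MvPolynomial (Fin n) K) | ∃ C ∈ V,
          w = (C.map (algebraMap K (FractionRing (MvPolynomial (Fin n) K)))).mulVec
            (fun i => algebraMap (MvPolynomial (Fin n) K)
              (FractionRing (MvPolynomial (Fin n) K)) (MvPolynomial.X i))})) :
    ∀ v : Fin n → L,
      Module.finrank L (Submodule.span L
        {w : Fin m → L | ∃ C ∈ V, w = (C.map (algebraMap K L)).mulVec v}) ≤ d := by
  intro v
  classical
  set F := FractionRing (MvPolynomial (Fin n) K) with hF
  set sF : Set (Fin m → F) := {w | ∃ C ∈ V,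
    w = (C.map (algebraMap K F)).mulVec
      (fun i => algebraMap (MvPolynomial (Fin n) K) F (MvPolynomial.X i))} with hsF
  set s : Set (Fin m → L) := {w | ∃ C ∈ V, w = (C.map (algebraMap K L)).mulVec v} with hs
  obtain ⟨b, hbsub, hbspan, hbind⟩ := exists_linearIndependent L s
  have hbfin : b.Finite := hbind.setFinite
  haveI := hbfin.fintype
  set r := Module.finrank L (Submodule.span L s) with hr
  have hcard : Fintype.card b = r := by
    have h1 := finrank_span_set_eq_card hbind
    rw [hbspan] at h1
    rw [hr, h1, Set.toFinset_card]
  let e : Fin r ≃ b := (Fintype.equivFinOfCardEq hcard).symm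
  have hC : ∀ x : b, ∃ C ∈ V, (x : Fin m → L) = (C.map (algebraMap K L)).mulVec v :=
    fun x => hbsub x.2
  choose Cf hCV hCeq using hC
  have hindL : LinearIndependent L
      (fun i : Fin r => ((Cf (e i)).map (algebraMap K L)).mulVec v) := by
    have h2 := hbind.comp e e.injective
    convert h2 using 1
    · funext i
      exact (hCeq (e i)).symm
    · rfl
  have hgen := indep_generic (fun i => Cf (e i)) v hindL
  set g : Fin r → (Fin m → F) := fun i => ((Cf (e i)).map (algebraMap K F)).mulVec
    (fun j => algebraMap (MvPolynomial (Fin n) K) F (MvPolynomial.X j)) with hg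
  have hrange : Set.range g ⊆ sF := by
    rintro w ⟨i, rfl⟩
    exact ⟨Cf (e i), hCV (e i), rfl⟩
  have h1 : r = Module.finrank F (Submodule.span F (Set.range g)) := by
    have := linearIndependent_iff_card_eq_finrank_span.mp hgen
    simpa [Set.finrank] using this
  rw [hd, h1]
  exact Submodule.finrank_mono (Submodule.span_mono hrange)
end

section
/- Let K be a field, L/K a field extension, and V a K-subspace of Mat_{m,n}(K). Define d = dim_{K(x)} span{C·x : C ∈ V} where x = (x₁,...,xₙ) are indeterminates. If #L ≥ d, then there exists v ∈ L^n such that dim_L span{C·v : C ∈ V} = d. -/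
open Matrix MvPolynomial Module Submodule

section Aux
variable {E : Type*} [Field E]

lemma aux_det_ne_zero_indep {k mm : ℕ} (w : Fin k → Fin mm → E)
    (r : Fin k → Fin mm) (h : (Matrix.of fun i j => w j (r i)).det ≠ 0) :
    LinearIndependent E w := by
  rw [Fintype.linearIndependent_iff]
  intro g hg j
  have h0 : (Matrix.of fun i j => w j (r i)).mulVec g = 0 := by
    ext i
    have := congrFun hg (r i)
    simpa [Matrix.mulVec, dotProduct, mul_comm] using this
  exact congrFun (Matrix.eq_zero_of_mulVec_eq_zero h h0) j

lemma aux_indep_exists_det {k mm : ℕ} (w : Fin k → Fin mm → E)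
    (h : LinearIndependent E w) :
    ∃ r : Fin k → Fin mm, (Matrix.of fun i j => w j (r i)).det ≠ 0 := by
  classical
  set M : Matrix (Fin k) (Fin mm) E := Matrix.of w with hM
  have hspan : span E (Set.range (Mᵀ : Matrix (Fin mm) (Fin k) E)) = ⊤ := by
    apply Submodule.eq_top_of_finrank_eq
    have h1 : M.rank = Module.finrank E (span E (Set.range Mᵀ)) :=
      M.rank_eq_finrank_span_cols
    have h2 : Mᵀ.rank = Module.finrank E (span E (Set.range M)) := by
      exact (Mᵀ).rank_eq_finrank_span_cols
    have h3 : Module.finrank E (span E (Set.range M)) = k := by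
      have hrw : Set.range M = Set.range w := rfl
      rw [hrw, finrank_span_eq_card h, Fintype.card_fin]
    rw [← h1, ← Matrix.rank_transpose, h2, h3]
    simp [Module.finrank_pi]
  obtain ⟨t, hts, htsp, hti⟩ := exists_linearIndependent E (Set.range Mᵀ)
  let b : Basis t E (span E (Set.range ((↑) : t → (Fin k → E)))) := Basis.span hti
  haveI : Fintype t := FiniteDimensional.fintypeBasisIndex b
  have hre : span E (Set.range ((↑) : t → (Fin k → E))) = ⊤ := by
    rw [Subtype.range_coe, htsp, hspan]
  have hcard : Fintype.card t = k := by
    have := Module.finrank_eq_card_basis b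
    rw [hre] at this
    rw [← this, finrank_top, Module.finrank_pi, Fintype.card_fin]
  let e : Fin k ≃ t := (Fintype.equivFinOfCardEq hcard).symm
  have hex : ∀ i : Fin k, ∃ j : Fin mm, Mᵀ j = (e i : Fin k → E) := fun i => hts (e i).2
  choose r hr using hex
  refine ⟨r, ?_⟩
  have hrows : (fun i => (Matrix.of fun i j => w j (r i)) i) = fun i => ((e i : Fin k → E)) := by
    funext i
    exact hr i
  have hind : LinearIndependent E (fun i => (Matrix.of fun i j => w j (r i)) i) := by
    rw [hrows]
    exact hti.comp e (Equiv.injective e)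
  have := Matrix.linearIndependent_rows_iff_isUnit.mp hind
  exact ((Matrix.isUnit_iff_isUnit_det _).mp this).ne_zero

end Aux

section Aux2
variable {E : Type*} [Field E]

lemma aux_extract {mm : ℕ} (S : Set (Fin mm → E)) :
    ∃ w : Fin (finrank E (span E S)) → (Fin mm → E),
      (∀ j, w j ∈ S) ∧ LinearIndependent E w := by
  classical
  obtain ⟨t, hts, htsp, hti⟩ := exists_linearIndependent E S
  let b : Basis t E (span E (Set.range ((↑) : t → (Fin mm → E)))) := Basis.span hti
  haveI : Fintype t := FiniteDimensional.fintypeBasisIndex b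
  have hsp : span E (Set.range ((↑) : t → (Fin mm → E))) = span E S := by
    rw [Subtype.range_coe, htsp]
  have hcard : Fintype.card t = finrank E (span E S) := by
    have := Module.finrank_eq_card_basis b
    rw [hsp] at this
    omega
  let e := Fintype.equivFinOfCardEq hcard
  exact ⟨fun i => ((e.symm i : t) : Fin mm → E), fun i => hts (e.symm i).2,
    hti.comp e.symm e.symm.injective⟩

lemma aux_card_le {mm k : ℕ} (S : Set (Fin mm → E)) (w : Fin k → Fin mm → E)
    (hmem : ∀ j, w j ∈ S) (h : LinearIndependent E w) :
    k ≤ finrank E (span E S) := by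
  have h' : LinearIndependent E (fun j => (⟨w j, subset_span (hmem j)⟩ : span E S)) := by
    apply LinearIndependent.of_comp (span E S).subtype
    convert h
    rfl
  simpa using h'.fintype_card_le_finrank

lemma aux_transfer {A E₁ E₂ : Type*} [CommRing A] [Field E₁] [Field E₂]
    {k mm : ℕ} (ψ₁ : A →+* E₁) (ψ₂ : A →+* E₂)
    (hker : ∀ a, ψ₁ a = 0 → ψ₂ a = 0)
    (P : Fin k → Fin mm → A)
    (h : LinearIndependent E₂ fun j i => ψ₂ (P j i)) :
    LinearIndependent E₁ fun j i => ψ₁ (P j i) := by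
  obtain ⟨r, hr⟩ := aux_indep_exists_det _ h
  refine aux_det_ne_zero_indep _ r ?_
  have e₂ : (Matrix.of fun i j => ψ₂ (P j (r i))) = (Matrix.of fun i j => P j (r i)).map ψ₂ := rfl
  have e₁ : (Matrix.of fun i j => ψ₁ (P j (r i))) = (Matrix.of fun i j => P j (r i)).map ψ₁ := rfl
  rw [e₂, ← RingHom.mapMatrix_apply, ← RingHom.map_det] at hr
  rw [e₁, ← RingHom.mapMatrix_apply, ← RingHom.map_det]
  intro h0
  exact hr (hker _ h0)

end Aux2

section Aux3

lemma aux_det_homog {σ K : Type*} [CommRing K] {k : ℕ}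
    (M : Matrix (Fin k) (Fin k) (MvPolynomial σ K))
    (h : ∀ i j, (M i j).IsHomogeneous 1) : M.det.IsHomogeneous k := by
  rw [Matrix.det_apply]
  apply MvPolynomial.IsHomogeneous.sum
  intro p _
  have hp : (∏ i, M (p i) i).IsHomogeneous k := by
    simpa using MvPolynomial.IsHomogeneous.prod Finset.univ _ (fun _ => 1) fun i _ => h (p i) i
  rcases Int.units_eq_one_or (Equiv.Perm.sign p) with hs | hs <;> rw [hs]
  · simpa using hp
  · simpa using hp.neg

noncomputable def auxPe {m n : ℕ} {K : Type*} [CommSemiring K]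
    (C : Matrix (Fin m) (Fin n) K) : Fin m → MvPolynomial (Fin n) K :=
  fun i => ∑ k, MvPolynomial.C (C i k) * MvPolynomial.X k

lemma auxPe_homog {m n : ℕ} {K : Type*} [CommSemiring K]
    (C : Matrix (Fin m) (Fin n) K) (i : Fin m) :
    (auxPe C i).IsHomogeneous 1 :=
  MvPolynomial.IsHomogeneous.sum _ _ _ fun k _ => MvPolynomial.isHomogeneous_C_mul_X _ _

lemma auxPe_eval {m n : ℕ} {K E : Type*} [CommSemiring K] [CommSemiring E]
    (ψ : MvPolynomial (Fin n) K →+* E) (C : Matrix (Fin m) (Fin n) K) :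
    (fun i => ψ (auxPe C i)) =
      (C.map (ψ.comp (MvPolynomial.C : K →+* MvPolynomial (Fin n) K))).mulVec
        (fun k => ψ (MvPolynomial.X k)) := by
  funext i
  simp [auxPe, Matrix.mulVec, dotProduct, Matrix.map_apply, map_sum]

end Aux3

theorem exists_specialization_of_card_ge {m n : ℕ} {K L : Type*} [Field K] [Field L]
    [Algebra K L]
    (V : Submodule K (Matrix (Fin m) (Fin n) K)) (d : ℕ)
    (hd : d = Module.finrank (FractionRing (MvPolynomial (Fin n) K))
      (Submodule.span (FractionRing (MvPolynomial (Fin n) K))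
        {w : Fin m → FractionRing (MvPolynomial (Fin n) K) | ∃ C ∈ V,
          w = (C.map (algebraMap K (FractionRing (MvPolynomial (Fin n) K)))).mulVec
            (fun i => algebraMap (MvPolynomial (Fin n) K)
              (FractionRing (MvPolynomial (Fin n) K)) (MvPolynomial.X i))}))
    (hL : (d : Cardinal) ≤ Cardinal.mk L) :
    ∃ v : Fin n → L,
      Module.finrank L (Submodule.span L
        {w : Fin m → L | ∃ C ∈ V, w = (C.map (algebraMap K L)).mulVec v}) = d := by
  classical
  subst hd
  set F' := FractionRing (MvPolynomial (Fin n) K) with hF'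
  set ψF : MvPolynomial (Fin n) K →+* F' := algebraMap _ _ with hψF
  have hψFinj : Function.Injective ψF := IsFractionRing.injective _ _
  have hcomp : (ψF.comp (MvPolynomial.C : K →+* MvPolynomial (Fin n) K)) = algebraMap K F' := by
    ext a
    rw [RingHom.comp_apply, ← MvPolynomial.algebraMap_eq]
    exact (IsScalarTower.algebraMap_apply K (MvPolynomial (Fin n) K) F' a).symm
  set SF : Set (Fin m → F') := {w : Fin m → F' | ∃ C ∈ V,
      w = (C.map (algebraMap K F')).mulVec
        (fun i => algebraMap (MvPolynomial (Fin n) K) F' (MvPolynomial.X i))} with hSF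
  have hSFmem : ∀ Cmat : Matrix (Fin m) (Fin n) K, Cmat ∈ V →
      (fun i => ψF (auxPe Cmat i)) ∈ SF := by
    intro Cmat hC
    refine ⟨Cmat, hC, ?_⟩
    rw [auxPe_eval ψF Cmat, hcomp]
  set D := Module.finrank F' (Submodule.span F' SF) with hD
  obtain ⟨w, hwmem, hwind⟩ := aux_extract SF
  choose Cc hCcV hCceq using hwmem
  have hwj : ∀ j, w j = fun i => ψF (auxPe (Cc j) i) := by
    intro j
    rw [hCceq j, auxPe_eval ψF (Cc j), hcomp]
  obtain ⟨r, hr⟩ := aux_indep_exists_det w hwind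
  set Q : Matrix (Fin D) (Fin D) (MvPolynomial (Fin n) K) :=
    Matrix.of (fun i j => auxPe (Cc j) (r i)) with hQ
  have hmap : ψF.mapMatrix Q = Matrix.of (fun i j => w j (r i)) := by
    funext i j
    simp only [RingHom.mapMatrix_apply, Matrix.map_apply, Matrix.of_apply, hQ]
    rw [hwj j]
  have hdetF : ψF Q.det ≠ 0 := by
    rw [RingHom.map_det, hmap]; exact hr
  have hQdet0 : Q.det ≠ 0 := fun h => hdetF (by rw [h, map_zero])
  have hhom : (Q.det).IsHomogeneous D := aux_det_homog Q (fun i j => auxPe_homog _ _)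
  have hqL0 : MvPolynomial.map (algebraMap K L) Q.det ≠ 0 := by
    intro h
    apply hQdet0
    apply MvPolynomial.map_injective _ ((algebraMap K L).injective)
    rw [h, map_zero]
  have hex : ∃ v : Fin n → L, MvPolynomial.eval v (MvPolynomial.map (algebraMap K L) Q.det) ≠ 0 := by
    by_contra hng
    push_neg at hng
    exact hqL0 ((hhom.map _).eq_zero_of_forall_eval_eq_zero_of_le_card hng hL)
  obtain ⟨v, hv⟩ := hex
  refine ⟨v, ?_⟩
  set ψL : MvPolynomial (Fin n) K →+* L := MvPolynomial.eval₂Hom (algebraMap K L) v with hψL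
  have hψLdet : ψL Q.det ≠ 0 := by
    simpa [hψL, MvPolynomial.eval_map] using hv
  set SL : Set (Fin m → L) := {w : Fin m → L | ∃ C ∈ V,
      w = (C.map (algebraMap K L)).mulVec v} with hSL
  have hcompL : (ψL.comp (MvPolynomial.C : K →+* MvPolynomial (Fin n) K)) = algebraMap K L := by
    ext a
    simp [hψL]
  have hXL : (fun k => ψL (MvPolynomial.X k)) = v := by
    funext k
    simp [hψL]
  have hSLeq : ∀ Cmat : Matrix (Fin m) (Fin n) K,
      (fun i => ψL (auxPe Cmat i)) = (Cmat.map (algebraMap K L)).mulVec v := by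
    intro Cmat
    rw [auxPe_eval ψL Cmat, hcompL, hXL]
  have hindL : LinearIndependent L (fun j => fun i => ψL (auxPe (Cc j) i)) := by
    apply aux_det_ne_zero_indep _ r
    show (ψL.mapMatrix Q).det ≠ 0
    rw [← RingHom.map_det]
    exact hψLdet
  have hle1 : D ≤ Module.finrank L (Submodule.span L SL) :=
    aux_card_le SL _ (fun j => ⟨Cc j, hCcV j, hSLeq (Cc j)⟩) hindL
  obtain ⟨u, humem, huind⟩ := aux_extract SL
  choose Cc' hCc'V hCc'eq using humem
  have huj : ∀ j, u j = fun i => ψL (auxPe (Cc' j) i) := by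
    intro j
    rw [hCc'eq j, ← hSLeq]
  have huind' : LinearIndependent L (fun j i => ψL (auxPe (Cc' j) i)) := by
    rw [show (fun j i => ψL (auxPe (Cc' j) i)) = u from funext fun j => (huj j).symm]
    exact huind
  have hindF : LinearIndependent F' (fun j i => ψF (auxPe (Cc' j) i)) :=
    aux_transfer ψF ψL
      (fun a ha => by rw [show a = 0 from hψFinj (by rw [ha, map_zero]), map_zero]) _ huind'
  have hle2 : Module.finrank L (Submodule.span L SL) ≤ D :=
    aux_card_le SF _ (fun j => hSFmem (Cc' j) (hCc'V j)) hindF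
  exact le_antisymm hle2 hle1
end

section
/- Let K be a field with char K ∉ {1,2,...,n}. Define H = {M ∈ Mat_n(K) : tr M = 0}. Then every K-subspace of H is a two-sided Mathieu subspace of Mat_n(K). -/
open Module LinearMap Set

private lemma aux_isNilpotent_pow_sub_pow {R : Type*} [Ring R] {x y : R} (h : Commute x y)
    (hn : IsNilpotent (x - y)) (m : ℕ) : IsNilpotent (x ^ m - y ^ m) := by
  rw [← h.geom_sum₂_mul m]
  refine Commute.isNilpotent_mul_left ?_ hn
  refine Commute.sum_left _ _ _ fun i _ ↦ ?_
  exact Commute.sub_right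
    (Commute.mul_left ((Commute.refl x).pow_left i) (h.symm.pow_left _))
    (Commute.mul_left (h.pow_left i) ((Commute.refl y).pow_left _))

private lemma aux_end_isNilpotent {L V : Type*} [Field L] [IsAlgClosed L]
    [AddCommGroup V] [Module L V] [FiniteDimensional L V]
    (hchar : ∀ i ∈ Finset.Icc 1 (finrank L V), (i : L) ≠ 0)
    (f : Module.End L V) (htr : ∀ m : ℕ, 1 ≤ m → trace L V (f ^ m) = 0) :
    IsNilpotent f := by
  classical
  set E := f.maxGenEigenspace with hE
  have hind := f.independent_maxGenEigenspace
  have htop := f.iSup_maxGenEigenspace_eq_top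
  have hds : DirectSum.IsInternal E :=
    DirectSum.isInternal_submodule_of_iSupIndep_of_iSup_eq_top hind htop
  have hfin : {μ | E μ ≠ ⊥}.Finite := WellFoundedGT.finite_ne_bot_of_iSupIndep hind
  have hmaps : ∀ (m : ℕ) (μ : L), MapsTo (f ^ m) (E μ) (E μ) := fun m μ ↦
    f.mapsTo_maxGenEigenspace_of_comm ((Commute.refl f).pow_right m) μ
  have hmaps0 : ∀ μ : L, MapsTo f (E μ) (E μ) := fun μ ↦
    f.mapsTo_maxGenEigenspace_of_comm rfl μ
  have key : ∀ (μ : L) (m : ℕ),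
      trace L (E μ) ((f ^ m).restrict (hmaps m μ)) = μ ^ m * (finrank L (E μ) : L) := by
    intro μ m
    set g := f.restrict (hmaps0 μ) with hg
    have hgm : (f ^ m).restrict (hmaps m μ) = g ^ m := by
      rw [hg]; exact (Module.End.pow_restrict m (hmaps0 μ) (hmaps m μ)).symm
    have hnil : IsNilpotent (g - algebraMap L (Module.End L (E μ)) μ) := by
      have h1 := f.isNilpotent_restrict_maxGenEigenspace_sub_algebraMap μ
      have h2 : g - algebraMap L (Module.End L (E μ)) μ
          = (f - algebraMap L (Module.End L V) μ).restrict
            (f.mapsTo_maxGenEigenspace_of_comm (Algebra.mul_sub_algebraMap_commutes f μ) μ) := by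
        ext x
        simp [hg, LinearMap.restrict_apply, LinearMap.coe_restrict_apply, Module.algebraMap_end_apply]
        rfl
      rw [h2]; exact h1
    have hnil' : IsNilpotent (g ^ m - algebraMap L (Module.End L (E μ)) (μ ^ m)) := by
      rw [map_pow]
      exact aux_isNilpotent_pow_sub_pow (Algebra.commute_algebraMap_right μ g) hnil m
    calc trace L (E μ) ((f ^ m).restrict (hmaps m μ))
        = trace L (E μ) ((1 : Module.End L (E μ)) ∘ₗ g ^ m) := by
          rw [hgm, Module.End.one_eq_id, LinearMap.id_comp]
      _ = μ ^ m * trace L (E μ) (1 : Module.End L (E μ)) :=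
          trace_comp_eq_mul_of_commute_of_isNilpotent (μ ^ m)
            (Commute.one_left _) hnil'
      _ = μ ^ m * (finrank L (E μ) : L) := by rw [LinearMap.trace_one]
  have hsum : ∀ m : ℕ, 1 ≤ m →
      ∑ μ ∈ hfin.toFinset, μ ^ m * (finrank L (E μ) : L) = 0 := by
    intro m hm
    have h1 := trace_eq_sum_trace_restrict' hds hfin (fun μ ↦ hmaps m μ)
    rw [htr m hm] at h1
    have h2 : ∑ μ ∈ hfin.toFinset, trace L (E μ) ((f ^ m).restrict (hmaps m μ))
        = ∑ μ ∈ hfin.toFinset, μ ^ m * (finrank L (E μ) : L) :=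
      Finset.sum_congr rfl fun μ _ ↦ key μ m
    rw [← h2, ← h1]
  set T := hfin.toFinset.filter (fun μ ↦ μ ≠ 0) with hT
  have hsum' : ∀ m : ℕ, 1 ≤ m → ∑ μ ∈ T, μ ^ m * (finrank L (E μ) : L) = 0 := by
    intro m hm
    rw [hT, Finset.sum_filter_of_ne]
    · exact hsum m hm
    · intro μ _ hne
      intro h0
      apply hne
      rw [h0, zero_pow (by omega), zero_mul]
  have hli := (linearIndependent_monoidHom (Multiplicative ℕ) L).comp
      (fun μ : {x // x ∈ T} ↦ powersHom L (μ : L))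
      ((powersHom L).injective.comp Subtype.val_injective)
  have hzero : ∀ μ : {x // x ∈ T}, ((μ : L) * (finrank L (E (μ : L)) : L)) = 0 := by
    refine Fintype.linearIndependent_iff.mp hli
      (fun μ ↦ (μ : L) * (finrank L (E (μ : L)) : L)) ?_
    funext x
    have h1 := hsum' (Multiplicative.toAdd x + 1) (by omega)
    have h2 : ∑ μ ∈ T, μ ^ (Multiplicative.toAdd x + 1) * (finrank L (E μ) : L)
        = ∑ μ ∈ T, ((μ * (finrank L (E μ) : L)) * μ ^ (Multiplicative.toAdd x)) :=
      Finset.sum_congr rfl fun μ _ ↦ by ring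
    rw [h2] at h1
    rw [← Finset.sum_attach T (fun μ ↦ ((μ * (finrank L (E μ) : L)) * μ ^ (Multiplicative.toAdd x)))] at h1
    simpa [Function.comp, powersHom_apply] using h1
  have hTe : ∀ μ ∈ T, False := by
    intro μ hμ
    have hμ0 : μ ≠ 0 := (Finset.mem_filter.mp hμ).2
    have hbot : E μ ≠ ⊥ := hfin.mem_toFinset.mp (Finset.mem_filter.mp hμ).1
    have hd0 : (finrank L (E μ) : L) = 0 := by
      have := hzero ⟨μ, hμ⟩
      exact (mul_eq_zero.mp this).resolve_left hμ0
    have hpos : 0 < finrank L (E μ) :=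
      finrank_pos_iff.mpr (Submodule.nontrivial_iff_ne_bot.mpr hbot)
    have hle : finrank L (E μ) ≤ finrank L V := Submodule.finrank_le _
    exact hchar _ (Finset.mem_Icc.mpr ⟨hpos, hle⟩) hd0
  have hbot : ∀ μ : L, μ ≠ 0 → E μ = ⊥ := by
    intro μ hμ
    by_contra h
    exact hTe μ (Finset.mem_filter.mpr ⟨hfin.mem_toFinset.mpr h, hμ⟩)
  have h0top : E 0 = ⊤ := by
    rw [eq_top_iff, ← htop]
    refine iSup_le fun μ ↦ ?_
    rcases eq_or_ne μ 0 with rfl | h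
    · exact le_rfl
    · exact (hbot μ h).trans_le bot_le
  refine ((LinearMap.charpoly_nilpotent_tfae f).out 2 0).mp ?_
  intro x
  have hx : x ∈ E 0 := h0top ▸ Submodule.mem_top
  obtain ⟨k, hk⟩ := (Module.End.mem_maxGenEigenspace f 0 x).mp hx
  exact ⟨k, by simpa using hk⟩

private lemma aux_matrix_pow_eq_zero {n : ℕ} {L : Type*} [Field L] [IsAlgClosed L]
    (hchar : ∀ i ∈ Finset.Icc 1 n, (i : L) ≠ 0)
    (A : Matrix (Fin n) (Fin n) L) (htr : ∀ m : ℕ, 1 ≤ m → (A ^ m).trace = 0) :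
    A ^ n = 0 := by
  have hfr : finrank L (Fin n → L) = n := Module.finrank_fin_fun L
  have htrace : ∀ B : Matrix (Fin n) (Fin n) L,
      trace L (Fin n → L) (Matrix.toLinAlgEquiv' B) = B.trace := by
    intro B
    rw [LinearMap.trace_eq_matrix_trace L (Pi.basisFun L (Fin n)),
      LinearMap.toMatrix_eq_toMatrix']
    congr 1
    exact LinearMap.toMatrix'_toLin' B
  have hnil : IsNilpotent (Matrix.toLinAlgEquiv' A) := by
    apply aux_end_isNilpotent (by rw [hfr]; exact hchar)
    intro m hm
    rw [← map_pow, htrace]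
    exact htr m hm
  have hnilA : IsNilpotent A := by
    obtain ⟨k, hk⟩ := hnil
    refine ⟨k, ?_⟩
    have hk' : Matrix.toLinAlgEquiv' (A ^ k) = 0 := by rw [map_pow]; exact hk
    have h2 := congrArg (Matrix.toLinAlgEquiv' (R := L) (n := Fin n)).symm hk'
    rwa [AlgEquiv.symm_apply_apply, map_zero] at h2
  have hcp : A.charpoly = Polynomial.X ^ n := by
    have h1 := Matrix.isNilpotent_charpoly_sub_pow_of_isNilpotent hnilA
    have h2 : A.charpoly - Polynomial.X ^ (Fintype.card (Fin n)) = 0 := h1.eq_zero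
    rw [Fintype.card_fin] at h2
    exact sub_eq_zero.mp h2
  have h3 := Matrix.aeval_self_charpoly A
  rw [hcp, map_pow, Polynomial.aeval_X] at h3
  exact h3

theorem traceZero_subspace_is_mathieu {n : ℕ} {K : Type*} [Field K]
    (hchar : ∀ i ∈ Finset.Icc 1 n, (i : K) ≠ 0)
    (M : Submodule K (Matrix (Fin n) (Fin n) K))
    (htr : ∀ A ∈ M, Matrix.trace A = 0) :
    ∀ a b c : Matrix (Fin n) (Fin n) K,
      (∀ m : ℕ, 1 ≤ m → a ^ m ∈ M) → ∃ N : ℕ, ∀ m ≥ N, b * a ^ m * c ∈ M := by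
  intro a b c ha
  refine ⟨n, fun m hm ↦ ?_⟩
  set L := AlgebraicClosure K
  have hinj : Function.Injective (algebraMap K L) := (algebraMap K L).injective
  set A : Matrix (Fin n) (Fin n) L := (algebraMap K L).mapMatrix a with hA
  have hcharL : ∀ i ∈ Finset.Icc 1 n, (i : L) ≠ 0 := by
    intro i hi h0
    apply hchar i hi
    apply hinj
    rw [map_natCast, map_zero]
    exact h0
  have htrA : ∀ m : ℕ, 1 ≤ m → (A ^ m).trace = 0 := by
    intro m hm
    rw [hA, ← map_pow]
    have : ((algebraMap K L).mapMatrix (a ^ m)).trace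
        = algebraMap K L ((a ^ m).trace) := by
      simp [Matrix.trace, RingHom.mapMatrix_apply, Matrix.diag, Matrix.map_apply, map_sum]
    rw [this, htr _ (ha m hm), map_zero]
  have hAn : A ^ n = 0 := aux_matrix_pow_eq_zero hcharL A htrA
  have han : a ^ n = 0 := by
    ext i j
    apply hinj
    have : ((algebraMap K L).mapMatrix (a ^ n)) i j = (0 : Matrix (Fin n) (Fin n) L) i j := by
      rw [map_pow, ← hA, hAn]
    simpa [RingHom.mapMatrix_apply, Matrix.map_apply] using this
  have ham : a ^ m = 0 := by
    rw [← Nat.add_sub_cancel' hm, pow_add, han, zero_mul]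
  rw [ham, mul_zero, zero_mul]
  exact M.zero_mem
end

section
/- Let K be a field with p := char K satisfying p ∉ {1,2,...,n-1}. Let a ∈ K be such that 0 ∉ {1,2,...,n} + {0,a} in K (i.e., a ∉ {-1,-2,...,-n} and none of 1,...,n is zero except possibly addressed by the characteristic assumption; in particular n + a ≠ 0). Define M = {M ∈ Mat_n(K) : M_{n1} = ⋯ = M_{n,n-1} = 0 and tr M + a·M_{nn} = 0}. Then M contains no nonzero idempotent matrix. -/
theorem no_nontrivial_idempotent {n : ℕ} (hn : 1 ≤ n) {K : Type*} [Field K]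
    (hchar : ∀ i ∈ Finset.Icc 1 (n - 1), (i : K) ≠ 0)
    (a : K)
    (ha : ∀ i ∈ Finset.Icc 1 n, (i : K) ≠ 0 ∧ (i : K) + a ≠ 0)
    (E : Matrix (Fin n) (Fin n) K)
    (hrow : ∀ j : Fin n, j ≠ ⟨n - 1, by omega⟩ → E ⟨n - 1, by omega⟩ j = 0)
    (htr : Matrix.trace E + a * E ⟨n - 1, by omega⟩ ⟨n - 1, by omega⟩ = 0)
    (hE : E * E = E) :
    E = 0 := by
  by_contra hE0
  set i : Fin n := ⟨n - 1, by omega⟩ with hi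
  -- E i i is an idempotent scalar
  have hd : E i i * E i i = E i i := by
    have h := congrFun (congrFun hE i) i
    rw [Matrix.mul_apply] at h
    rwa [Finset.sum_eq_single i (fun j _ hj => by rw [hrow j hj, zero_mul])
      (by simp)] at h
  -- the linear map and its projection structure
  set f : (Fin n → K) →ₗ[K] (Fin n → K) := Matrix.toLin' E with hf
  have hff : f ∘ₗ f = f := by rw [hf, ← Matrix.toLin'_mul, hE]
  have hproj : LinearMap.IsProj (LinearMap.range f) f := by
    refine ⟨fun x => LinearMap.mem_range_self f x, ?_⟩
    rintro x ⟨y, rfl⟩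
    exact congrFun (congrArg DFunLike.coe hff) y
  have htrace : LinearMap.trace K (Fin n → K) f =
      (Module.finrank K (LinearMap.range f) : K) := hproj.trace
  -- trace f = Matrix.trace E
  have htrE : LinearMap.trace K (Fin n → K) f = Matrix.trace E := by
    rw [LinearMap.trace_eq_matrix_trace K (Pi.basisFun K (Fin n)) f,
      LinearMap.toMatrix_eq_toMatrix', hf, LinearMap.toMatrix'_toLin']
  set r : ℕ := Module.finrank K (LinearMap.range f) with hr
  have hr1 : 1 ≤ r := by
    rw [hr, Nat.one_le_iff_ne_zero]
    intro h0
    have : LinearMap.range f = ⊥ := Submodule.finrank_eq_zero.mp h0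
    have hfz : f = 0 := LinearMap.range_eq_bot.mp this
    apply hE0
    have := congrArg Matrix.toLin' (rfl : E = E)
    have : LinearMap.toMatrix' f = E := by rw [hf, LinearMap.toMatrix'_toLin']
    rw [← this, hfz, map_zero]
  have hrn : r ≤ n := by
    have := Submodule.finrank_le (LinearMap.range f)
    simpa using this
  have hmem : r ∈ Finset.Icc 1 n := Finset.mem_Icc.mpr ⟨hr1, hrn⟩
  have hEr : Matrix.trace E = (r : K) := by rw [← htrE, htrace]
  rcases IsIdempotentElem.iff_eq_zero_or_one.mp hd with h0 | h1
  · rw [hEr, h0, mul_zero, add_zero] at htr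
    exact (ha r hmem).1 htr
  · rw [hEr, h1, mul_one] at htr
    exact (ha r hmem).2 htr
end

section
/- Let K be a field and I a maximal left ideal among left ideals of Mat_n(K) contained in a given K-subspace M of Mat_n(K). Then I is unique, dim_K I = n·k for some 0 ≤ k ≤ n, and there exists T ∈ GL_n(K) with T^{-1}·I·T = {A ∈ Mat_n(K) : A·e_j = 0 for all j > k}. Moreover I is generated as a left ideal by a single idempotent. -/
private lemma exists_factor {K V₁ V₂ V₃ : Type*} [Field K] [AddCommGroup V₁] [AddCommGroup V₂]
    [AddCommGroup V₃] [Module K V₁] [Module K V₂] [Module K V₃]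
    (f : V₁ →ₗ[K] V₂) (g : V₁ →ₗ[K] V₃) (h : LinearMap.ker f ≤ LinearMap.ker g) :
    ∃ h' : V₂ →ₗ[K] V₃, g = h'.comp f := by
  obtain ⟨h', hh'⟩ := LinearMap.exists_extend
    (((LinearMap.ker f).liftQ g h).comp f.quotKerEquivRange.symm.toLinearMap)
  refine ⟨h', ?_⟩
  ext x
  have h0 : ((LinearMap.range f).subtype ⟨f x, LinearMap.mem_range_self f x⟩) = f x := rfl
  have h1 : h' (f x) = ((LinearMap.ker f).liftQ g h)
      (f.quotKerEquivRange.symm ⟨f x, LinearMap.mem_range_self f x⟩) := by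
    conv_lhs => rw [← h0, ← LinearMap.comp_apply, hh']
    rfl
  have h2 : f.quotKerEquivRange.symm ⟨f x, LinearMap.mem_range_self f x⟩
      = Submodule.Quotient.mk x := by
    rw [LinearEquiv.symm_apply_eq]
    ext
    simp [LinearMap.quotKerEquivRange_apply_mk]
  simp only [LinearMap.comp_apply, h1, h2, Submodule.liftQ_apply]

theorem maximal_left_ideal_in_subspace {n : ℕ} {K : Type*} [Field K]
    (M : Submodule K (Matrix (Fin n) (Fin n) K))
    (I : Ideal (Matrix (Fin n) (Fin n) K))
    (hIM : (I : Set (Matrix (Fin n) (Fin n) K)) ⊆ M)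
    (hmax : ∀ J : Ideal (Matrix (Fin n) (Fin n) K),
      (J : Set (Matrix (Fin n) (Fin n) K)) ⊆ M → I ≤ J → J = I) :
    (∀ J : Ideal (Matrix (Fin n) (Fin n) K),
      (J : Set (Matrix (Fin n) (Fin n) K)) ⊆ M →
      (∀ J' : Ideal (Matrix (Fin n) (Fin n) K),
        (J' : Set (Matrix (Fin n) (Fin n) K)) ⊆ M → J ≤ J' → J' = J) → J = I) ∧
    (∃ k ≤ n,
      Module.finrank K (I.restrictScalars K) = n * k ∧
      ∃ T : (Matrix (Fin n) (Fin n) K)ˣ,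
        (fun A => ((T⁻¹ : (Matrix (Fin n) (Fin n) K)ˣ) : Matrix (Fin n) (Fin n) K) *
            A * (T : Matrix (Fin n) (Fin n) K)) '' (I : Set (Matrix (Fin n) (Fin n) K)) =
          {A : Matrix (Fin n) (Fin n) K | ∀ j : Fin n, k ≤ (j : ℕ) →
            A.mulVec (Pi.single j 1) = 0}) ∧
    ∃ e : Matrix (Fin n) (Fin n) K, e * e = e ∧ I = Ideal.span {e} := by
  classical
  -- Part 1: uniqueness
  have part1 : ∀ J : Ideal (Matrix (Fin n) (Fin n) K),
      (J : Set (Matrix (Fin n) (Fin n) K)) ⊆ M →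
      (∀ J' : Ideal (Matrix (Fin n) (Fin n) K),
        (J' : Set (Matrix (Fin n) (Fin n) K)) ⊆ M → J ≤ J' → J' = J) → J = I := by
    intro J hJM hJmax
    have hsub : ((I ⊔ J : Ideal (Matrix (Fin n) (Fin n) K)) : Set (Matrix (Fin n) (Fin n) K)) ⊆ M := by
      intro x hx
      rw [SetLike.mem_coe, Submodule.mem_sup] at hx
      obtain ⟨a, ha, b, hb, rfl⟩ := hx
      exact M.add_mem (hIM ha) (hJM hb)
    rw [← hJmax _ hsub le_sup_right, hmax _ hsub le_sup_left]
  -- helper : matrix equality from mulVec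
  have hext : ∀ X Y : Matrix (Fin n) (Fin n) K, (∀ v, X.mulVec v = Y.mulVec v) → X = Y := by
    intro X Y h
    ext i j
    have := congrFun (h (Pi.single j 1)) i
    simpa [Matrix.mulVec_single] using this
  -- spanning family of I
  obtain ⟨s, hs⟩ := IsNoetherian.noetherian (I.restrictScalars K)
  have hsI : ∀ A : s, (A : Matrix (Fin n) (Fin n) K) ∈ I := by
    intro A
    have : (A : Matrix (Fin n) (Fin n) K) ∈ Submodule.span K (s : Set (Matrix (Fin n) (Fin n) K)) :=
      Submodule.subset_span A.2
    rw [hs] at this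
    exact this
  set W : Submodule K (Fin n → K) :=
    ⨅ A : s, LinearMap.ker (Matrix.mulVecLin (A : Matrix (Fin n) (Fin n) K)) with hWdef
  -- every element of I kills W
  have hWI : ∀ A ∈ I, ∀ x ∈ W, A.mulVec x = 0 := by
    have hspan : ∀ A ∈ Submodule.span K (s : Set (Matrix (Fin n) (Fin n) K)),
        ∀ x ∈ W, A.mulVec x = 0 := by
      intro A hA
      induction hA using Submodule.span_induction with
      | mem B hB =>
        intro x hx
        have := Submodule.mem_iInf (fun A : s =>
          LinearMap.ker (Matrix.mulVecLin (A : Matrix (Fin n) (Fin n) K))) |>.1 hx ⟨B, hB⟩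
        simpa [LinearMap.mem_ker] using this
      | zero => intro x hx; simp
      | add B C _ _ hB hC =>
        intro x hx
        rw [Matrix.add_mulVec, hB x hx, hC x hx, add_zero]
      | smul c B _ hB =>
        intro x hx
        rw [Matrix.smul_mulVec, hB x hx, smul_zero]
    intro A hA
    exact hspan A (by rw [hs]; exact hA)
  -- key: anything killing W is in I
  have hmem : ∀ B : Matrix (Fin n) (Fin n) K,
      (∀ x ∈ W, B.mulVec x = 0) → B ∈ I := by
    intro B hB
    set f : (Fin n → K) →ₗ[K] (s → (Fin n → K)) :=
      LinearMap.pi fun A : s => Matrix.mulVecLin (A : Matrix (Fin n) (Fin n) K) with hfdef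
    have hker : LinearMap.ker f ≤ LinearMap.ker B.mulVecLin := by
      intro x hx
      rw [hfdef, LinearMap.ker_pi] at hx
      exact LinearMap.mem_ker.2 (hB x hx)
    obtain ⟨h', hh'⟩ := exists_factor f B.mulVecLin hker
    set C : s → Matrix (Fin n) (Fin n) K := fun A =>
      LinearMap.toMatrix' (h' ∘ₗ LinearMap.single K (fun _ : s => Fin n → K) A) with hCdef
    have key : ∀ v, B.mulVec v = ∑ A : s, (C A * (A : Matrix (Fin n) (Fin n) K)).mulVec v := by
      intro v
      have h1 : B.mulVec v = h' (f v) := by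
        have := congrArg (fun g => g v) hh'
        simpa using this
      have h2 : f v = ∑ A : s, Pi.single A (f v A) := (Finset.univ_sum_single (f v)).symm
      rw [h1, h2, map_sum]
      refine Finset.sum_congr rfl fun A _ => ?_
      rw [← Matrix.mulVec_mulVec]
      have h3 : (C A).mulVec ((A : Matrix (Fin n) (Fin n) K).mulVec v)
          = (h' ∘ₗ LinearMap.single K (fun _ : s => Fin n → K) A)
            ((A : Matrix (Fin n) (Fin n) K).mulVec v) := by
        rw [hCdef, ← Matrix.toLin'_apply, Matrix.toLin'_toMatrix']
      rw [h3, LinearMap.comp_apply]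
      rfl
    have hBeq : B = ∑ A : s, C A * (A : Matrix (Fin n) (Fin n) K) := by
      ext i j
      have := congrFun (key (Pi.single j 1)) i
      simpa [Matrix.mulVec_single, Matrix.sum_apply] using this
    rw [hBeq]
    exact Submodule.sum_mem _ fun A _ => I.smul_mem (C A) (hsI A)
  -- complement and projector
  obtain ⟨U, hU⟩ := Submodule.exists_isCompl W
  set π : (Fin n → K) →ₗ[K] (Fin n → K) :=
    U.subtype ∘ₗ (U.linearProjOfIsCompl W hU.symm) with hπdef
  have hπU : ∀ x ∈ U, π x = x := by
    intro x hx
    have := Submodule.projectionOnto_apply_left hU.symm ⟨x, hx⟩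
    simp only [hπdef, LinearMap.comp_apply, Submodule.subtype_apply]
    exact congrArg Subtype.val this
  have hπW : ∀ x ∈ W, π x = 0 := by
    intro x hx
    simp [hπdef]
    exact Submodule.projectionOnto_apply_of_mem_right hU.symm hx
  have hπmem : ∀ x, π x ∈ U := fun x => (U.linearProjOfIsCompl W hU.symm x).2
  have hππ : ∀ x, π (π x) = π x := fun x => hπU _ (hπmem x)
  have hsub : ∀ x, x - π x ∈ W := by
    intro x
    have hx : x ∈ W ⊔ U := by rw [hU.sup_eq_top]; trivial
    obtain ⟨w, hw, u, hu, hx⟩ := Submodule.mem_sup.1 hx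
    have : π x = u := by
      rw [← hx, map_add, hπW w hw, hπU u hu, zero_add]
    rw [this, ← hx, add_sub_cancel_right]
    exact hw
  set e : Matrix (Fin n) (Fin n) K := LinearMap.toMatrix' π with hedef
  have hemul : ∀ x, e.mulVec x = π x := by
    intro x
    rw [hedef, ← Matrix.toLin'_apply, Matrix.toLin'_toMatrix']
  have he2 : e * e = e := by
    apply hext
    intro v
    simp only [← Matrix.mulVec_mulVec, hemul, hππ]
  have heI : e ∈ I := by
    apply hmem
    intro x hx
    rw [hemul, hπW x hx]
  have hIe : ∀ A ∈ I, A * e = A := by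
    intro A hA
    apply hext
    intro v
    rw [← Matrix.mulVec_mulVec, hemul]
    have h0 : A.mulVec (v - π v) = 0 := hWI A hA _ (hsub v)
    rw [Matrix.mulVec_sub] at h0
    exact (sub_eq_zero.mp h0).symm
  have hIchar : ∀ A : Matrix (Fin n) (Fin n) K, A ∈ I ↔ A * e = A := by
    intro A
    refine ⟨fun h => hIe A h, fun h => ?_⟩
    rw [← h]
    have := I.smul_mem A heI
    rwa [smul_eq_mul] at this
  have hspanI : I = Ideal.span {e} := by
    apply le_antisymm
    · intro A hA
      exact Submodule.mem_span_singleton.2 ⟨A, by rw [smul_eq_mul, hIe A hA]⟩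
    · rw [Ideal.span_le]
      simpa using heI
  -- dimensions
  set k := Module.finrank K U with hkdef
  set m := Module.finrank K W with hmdef
  have hkm : k + m = n := by
    have h1 := Submodule.finrank_add_eq_of_isCompl hU.symm
    rwa [Module.finrank_pi, Fintype.card_fin] at h1
  have hkn : k ≤ n := by omega
  -- adapted basis
  set b₀ : Module.Basis (Fin k ⊕ Fin m) K (Fin n → K) :=
    ((Module.finBasis K U).prod (Module.finBasis K W)).map
      (Submodule.prodEquivOfIsCompl U W hU.symm) with hb₀def
  have hb₀l : ∀ i, b₀ (Sum.inl i) ∈ U := by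
    intro i
    rw [hb₀def, Module.Basis.map_apply, Module.Basis.prod_apply]
    simp only [Sum.elim_inl, Function.comp_apply, LinearMap.inl_apply]
    rw [Submodule.coe_prodEquivOfIsCompl']
    simp
  have hb₀r : ∀ i, b₀ (Sum.inr i) ∈ W := by
    intro i
    rw [hb₀def, Module.Basis.map_apply, Module.Basis.prod_apply]
    simp only [Sum.elim_inr, Function.comp_apply, LinearMap.inr_apply]
    rw [Submodule.coe_prodEquivOfIsCompl']
    simp
  set eqv : (Fin k ⊕ Fin m) ≃ Fin n := finSumFinEquiv.trans (finCongr hkm) with heqvdef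
  set b : Module.Basis (Fin n) K (Fin n → K) := b₀.reindex eqv with hbdef
  have hbj : ∀ j : Fin n, ((j : ℕ) < k → π (b j) = b j) ∧ (k ≤ (j : ℕ) → π (b j) = 0) := by
    intro j
    have happ : b j = b₀ (eqv.symm j) := by rw [hbdef, Module.Basis.reindex_apply]
    rcases hsymm : eqv.symm j with i | i
    · have hj : (j : ℕ) = (i : ℕ) := by
        have h1 := congrArg eqv hsymm
        rw [Equiv.apply_symm_apply] at h1
        rw [h1, heqvdef]
        simp
      have hik := i.isLt
      constructor
      · intro _
        rw [happ, hsymm]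
        exact hπU _ (hb₀l i)
      · intro hk; omega
    · have hj : (j : ℕ) = k + (i : ℕ) := by
        have h1 := congrArg eqv hsymm
        rw [Equiv.apply_symm_apply] at h1
        rw [h1, heqvdef]
        simp
      constructor
      · intro hk; omega
      · intro _
        rw [happ, hsymm]
        exact hπW _ (hb₀r i)
  -- the change of basis matrix
  set T : Matrix (Fin n) (Fin n) K := (Pi.basisFun K (Fin n)).toMatrix ⇑b with hTdef
  haveI hTinv : Invertible T := (Pi.basisFun K (Fin n)).invertibleToMatrix b
  have hTij : ∀ i j, T i j = b j i := by
    intro i j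
    rw [hTdef, Module.Basis.toMatrix_apply, Pi.basisFun_repr]
  set D : Matrix (Fin n) (Fin n) K :=
    Matrix.diagonal (fun j : Fin n => if (j : ℕ) < k then (1:K) else 0) with hDdef
  have hTD : e * T = T * D := by
    ext i j
    rw [hDdef, Matrix.mul_diagonal, Matrix.mul_apply]
    have hcol : (∑ l, e i l * T l j) = π (b j) i := by
      have h1 : e.mulVec (b j) = π (b j) := hemul _
      rw [← h1]
      simp [Matrix.mulVec, dotProduct, hTij]
    rw [hcol]
    by_cases hj : (j : ℕ) < k
    · rw [if_pos hj, mul_one, (hbj j).1 hj, hTij]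
    · rw [if_neg hj, mul_zero, (hbj j).2 (le_of_not_gt hj)]
      rfl
  set Tu : (Matrix (Fin n) (Fin n) K)ˣ := unitOfInvertible T with hTudef
  have hTu_inv : ((Tu⁻¹ : (Matrix (Fin n) (Fin n) K)ˣ) : Matrix (Fin n) (Fin n) K) = ⅟T := rfl
  have hTu_coe : ((Tu : (Matrix (Fin n) (Fin n) K)ˣ) : Matrix (Fin n) (Fin n) K) = T := rfl
  have cancel : ∀ X : Matrix (Fin n) (Fin n) K, T * (⅟T * X * T) * ⅟T = X := by
    intro X
    calc T * (⅟T * X * T) * ⅟T = T * ⅟T * X * (T * ⅟T) := by simp only [mul_assoc]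
      _ = X := by rw [mul_invOf_self, one_mul, mul_one]
  have cancel' : ∀ X : Matrix (Fin n) (Fin n) K, ⅟T * (T * X * ⅟T) * T = X := by
    intro X
    calc ⅟T * (T * X * ⅟T) * T = ⅟T * T * X * (⅟T * T) := by simp only [mul_assoc]
      _ = X := by rw [invOf_mul_self, one_mul, mul_one]
  have hconj : ⅟T * e * T = D := by
    rw [mul_assoc, hTD, ← mul_assoc, invOf_mul_self, one_mul]
  have he' : e = T * D * ⅟T := by
    rw [← hconj]
    exact (cancel e).symm
  have himg : ∀ B : Matrix (Fin n) (Fin n) K,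
      (∃ A ∈ I, ⅟T * A * T = B) ↔ B * D = B := by
    intro B
    constructor
    · rintro ⟨A, hA, rfl⟩
      have hAe := hIe A hA
      calc ⅟T * A * T * D = ⅟T * A * (T * D) := by rw [mul_assoc]
        _ = ⅟T * A * (e * T) := by rw [hTD]
        _ = ⅟T * (A * e) * T := by simp only [mul_assoc]
        _ = ⅟T * A * T := by rw [hAe, mul_assoc]
    · intro hB
      refine ⟨T * B * ⅟T, ?_, cancel' B⟩
      rw [hIchar, he']
      calc T * B * ⅟T * (T * D * ⅟T) = T * B * (⅟T * T) * D * ⅟T := by simp only [mul_assoc]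
        _ = T * B * D * ⅟T := by rw [invOf_mul_self, mul_one]
        _ = T * B * ⅟T := by rw [mul_assoc T B D, hB]
  have hDchar : ∀ B : Matrix (Fin n) (Fin n) K,
      B * D = B ↔ ∀ j : Fin n, k ≤ (j : ℕ) → ∀ i, B i j = 0 := by
    intro B
    constructor
    · intro h j hj i
      have h1 := congrFun (congrFun h i) j
      rw [hDdef, Matrix.mul_diagonal, if_neg (not_lt.2 hj), mul_zero] at h1
      exact h1.symm
    · intro h
      ext i j
      rw [hDdef, Matrix.mul_diagonal]
      by_cases hj : (j : ℕ) < k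
      · rw [if_pos hj, mul_one]
      · rw [if_neg hj, mul_zero, h j (not_lt.1 hj) i]
  have himage : (fun A => ((Tu⁻¹ : (Matrix (Fin n) (Fin n) K)ˣ) : Matrix (Fin n) (Fin n) K) *
      A * (Tu : Matrix (Fin n) (Fin n) K)) '' (I : Set (Matrix (Fin n) (Fin n) K)) =
      {A : Matrix (Fin n) (Fin n) K | ∀ j : Fin n, k ≤ (j : ℕ) →
        A.mulVec (Pi.single j 1) = 0} := by
    ext B
    simp only [Set.mem_image, SetLike.mem_coe, Set.mem_setOf_eq, hTu_inv, hTu_coe]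
    constructor
    · rintro ⟨A, hA, rfl⟩
      intro j hj
      have hBD : (⅟T * A * T) * D = ⅟T * A * T := (himg _).1 ⟨A, hA, rfl⟩
      have h0 := (hDchar _).1 hBD j hj
      rw [Matrix.mulVec_single]
      funext i
      simpa using h0 i
    · intro hB
      have hBD : B * D = B := (hDchar B).2 (fun j hj i => by
        have := congrFun (hB j hj) i
        simpa [Matrix.mulVec_single] using this)
      exact (himg B).2 hBD
  -- the embedding of n×k matrices
  set Ψ : Matrix (Fin n) (Fin k) K →ₗ[K] Matrix (Fin n) (Fin n) K :=
    { toFun := fun C => Matrix.of fun i j => if h : (j : ℕ) < k then C i ⟨j, h⟩ else 0,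
      map_add' := by
        intro C C'
        ext i j
        simp only [Matrix.of_apply, Matrix.add_apply]
        split <;> simp
      map_smul' := by
        intro c C
        ext i j
        simp only [Matrix.of_apply, Matrix.smul_apply, RingHom.id_apply]
        split <;> simp } with hΨdef
  have hΨapp : ∀ C i j, Ψ C i j = if h : (j : ℕ) < k then C i ⟨j, h⟩ else 0 := fun C i j => rfl
  have hΨinj : Function.Injective Ψ := by
    intro C C' h
    ext i j
    have h2 := congrFun (congrFun h i) (Fin.castLE hkn j)
    rw [hΨapp, hΨapp, dif_pos (by simpa using j.isLt : ((Fin.castLE hkn j : Fin n) : ℕ) < k)] at h2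
    simpa using h2
  have hΨrange : ∀ B, (∃ C, Ψ C = B) ↔ B * D = B := by
    intro B
    constructor
    · rintro ⟨C, rfl⟩
      apply (hDchar _).2
      intro j hj i
      rw [hΨapp, dif_neg (not_lt.2 hj)]
    · intro hB
      refine ⟨Matrix.of fun i (j : Fin k) => B i (Fin.castLE hkn j), ?_⟩
      ext i j
      rw [hΨapp]
      by_cases hj : (j : ℕ) < k
      · rw [dif_pos hj]
        simp only [Matrix.of_apply]
        congr 1
      · rw [dif_neg hj]
        exact ((hDchar B).1 hB j (not_lt.1 hj) i).symm
  -- conjugation as a linear equivalence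
  set c1 : Matrix (Fin n) (Fin n) K →ₗ[K] Matrix (Fin n) (Fin n) K :=
    (LinearMap.mulRight K T).comp (LinearMap.mulLeft K (⅟T)) with hc1def
  set c2 : Matrix (Fin n) (Fin n) K →ₗ[K] Matrix (Fin n) (Fin n) K :=
    (LinearMap.mulRight K (⅟T)).comp (LinearMap.mulLeft K T) with hc2def
  have hc1app : ∀ A, c1 A = ⅟T * A * T := fun A => rfl
  have hc2app : ∀ A, c2 A = T * A * ⅟T := fun A => rfl
  have hc12 : c1 ∘ₗ c2 = LinearMap.id := by
    apply LinearMap.ext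
    intro A
    simp only [LinearMap.comp_apply, LinearMap.id_apply, hc1app, hc2app]
    exact cancel' A
  have hc21 : c2 ∘ₗ c1 = LinearMap.id := by
    apply LinearMap.ext
    intro A
    simp only [LinearMap.comp_apply, LinearMap.id_apply, hc1app, hc2app]
    exact cancel A
  set cEquiv : Matrix (Fin n) (Fin n) K ≃ₗ[K] Matrix (Fin n) (Fin n) K :=
    LinearEquiv.ofLinear c1 c2 hc12 hc21 with hcEdef
  have hdim : Module.finrank K (I.restrictScalars K) = n * k := by
    have h1 := LinearEquiv.finrank_eq (cEquiv.submoduleMap (I.restrictScalars K))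
    have h2 : Submodule.map (cEquiv : Matrix (Fin n) (Fin n) K →ₗ[K] Matrix (Fin n) (Fin n) K)
        (I.restrictScalars K) = LinearMap.range Ψ := by
      ext B
      rw [Submodule.mem_map, LinearMap.mem_range]
      constructor
      · rintro ⟨A, hA, rfl⟩
        exact (hΨrange _).2 ((himg _).1 ⟨A, hA, rfl⟩)
      · rintro ⟨C, rfl⟩
        obtain ⟨A, hA, hAeq⟩ := (himg (Ψ C)).2 ((hΨrange _).1 ⟨C, rfl⟩)
        exact ⟨A, hA, hAeq⟩
    rw [h2] at h1
    rw [h1, LinearMap.finrank_range_of_inj hΨinj, Module.finrank_matrix,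
      Fintype.card_fin, Fintype.card_fin, Module.finrank_self, mul_one]
  exact ⟨part1, ⟨k, hkn, hdim, Tu, himage⟩, e, he2, hspanI⟩
end
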